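/- With S, a as above, for any b ∈ S and k ≥ 0 with b - k•a ∈ S, and any y ∈ (S + b) \ (S + b + a), the set {m ∈ ℕ : y - m•a ∈ S + k•a} is nonempty and bounded above. -/

import Mathlib

theorem stmt_10 (d r : ℕ) (S : AddSubmonoid (Fin d → ℤ)) (e : Fin r → (Fin d → ℤ))
    (hgen : S = AddSubmonoid.closure (Set.range e))
    (hgrp : ∀ x : Fin d → ℤ, ∃ s ∈ S, ∃ t ∈ S, x = s - t)
    (hne : (S : Set (Fin d → ℤ)) ≠ Set.univ)
    (a : Fin d → ℤ) (ha : a = ∑ i, e i)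
    (k : ℕ) (b : Fin d → ℤ) (hb : b ∈ S) (hbk : b - k • a ∈ S) :
    ∀ y ∈ (fun s => s + b) '' (S : Set (Fin d → ℤ)) \
        (fun s => s + b + a) '' (S : Set (Fin d → ℤ)),
      ({m : ℕ | y - m • a ∈ (fun s => s + k • a) '' (S : Set (Fin d → ℤ))}).Nonempty ∧
      BddAbove {m : ℕ | y - m • a ∈ (fun s => s + k • a) '' (S : Set (Fin d → ℤ))} := by
  have heS : ∀ i, e i ∈ S := fun i => hgen ▸ AddSubmonoid.subset_closure (Set.mem_range_self i)
  have haS : a ∈ S := ha ▸ sum_mem (fun i _ => heS i)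
  -- For every t ∈ S there is N with N•a - t ∈ S
  have hNa : ∀ t ∈ S, ∃ N : ℕ, N • a - t ∈ S := by
    intro t ht
    rw [hgen] at ht
    induction ht using AddSubmonoid.closure_induction with
    | mem x hx =>
      obtain ⟨i, rfl⟩ := hx
      refine ⟨1, ?_⟩
      have h1 : (1 : ℕ) • a - e i = ∑ j ∈ Finset.univ.erase i, e j := by
        rw [one_smul, ha, ← Finset.add_sum_erase _ _ (Finset.mem_univ i)]
        abel
      rw [h1]
      exact sum_mem (fun j _ => heS j)
    | zero => exact ⟨0, by simpa using S.zero_mem⟩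
    | add x y hx hy ihx ihy =>
      obtain ⟨N1, h1⟩ := ihx
      obtain ⟨N2, h2⟩ := ihy
      refine ⟨N1 + N2, ?_⟩
      have h3 : (N1 + N2) • a - (x + y) = (N1 • a - x) + (N2 • a - y) := by
        rw [add_smul]; abel
      rw [h3]; exact S.add_mem h1 h2
  -- For every z there is N with z + N•a ∈ S
  have habs : ∀ z : Fin d → ℤ, ∃ N : ℕ, z + N • a ∈ S := by
    intro z
    obtain ⟨s, hs, t, ht, rfl⟩ := hgrp z
    obtain ⟨N, hN⟩ := hNa t ht
    refine ⟨N, ?_⟩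
    have h1 : s - t + N • a = s + (N • a - t) := by abel
    rw [h1]; exact S.add_mem hs hN
  intro y hy
  obtain ⟨⟨s, hs, hsy⟩, -⟩ := hy
  simp only [] at hsy
  constructor
  · refine ⟨0, ⟨s + (b - k • a), S.add_mem hs hbk, ?_⟩⟩
    simp only []
    rw [← hsy, zero_smul, sub_zero]
    abel
  · by_contra hub
    rw [not_bddAbove_iff] at hub
    -- the set is downward closed
    have hdc : ∀ m ∈ {m : ℕ | y - m • a ∈ (fun s => s + k • a) '' (S : Set (Fin d → ℤ))},
        ∀ m' ≤ m, m' ∈ {m : ℕ | y - m • a ∈ (fun s => s + k • a) '' (S : Set (Fin d → ℤ))} := by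
      rintro m ⟨t, ht, htm⟩ m' hm'
      simp only [] at htm
      refine ⟨t + (m - m') • a, S.add_mem ht (AddSubmonoid.nsmul_mem S haS _), ?_⟩
      simp only []
      have h1 : (m' : ℕ) • a + (m - m') • a = m • a := by
        rw [← add_smul, Nat.add_sub_cancel' hm']
      have h2 : t + (m - m') • a + k • a = (t + k • a) + (m - m') • a := by abel
      rw [h2, htm, eq_sub_iff_add_eq, add_assoc, add_comm ((m - m') • a), h1,
        sub_add_cancel]
    have hall : ∀ m : ℕ, m ∈ {m : ℕ | y - m • a ∈ (fun s => s + k • a) '' (S : Set (Fin d → ℤ))} := by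
      intro m
      obtain ⟨m', hm', hlt⟩ := hub m
      exact hdc m' hm' m hlt.le
    apply hne
    rw [Set.eq_univ_iff_forall]
    intro x
    obtain ⟨N, hN⟩ := habs (x - y + k • a)
    obtain ⟨t, ht, htN⟩ := hall N
    simp only [] at htN
    have hx : x = (x - y + k • a + N • a) + t := by
      have : t = y - N • a - k • a := by rw [eq_sub_iff_add_eq, htN]
      rw [this]; abel
    rw [hx]
    exact S.add_mem hN ht
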